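/- Let G = (V0 ∪ V1, E) be a bipartite graph with |V0| = |V1| = n and nonnegative edge costs c, let 0 ≤ d ≤ n, and let Ḡ be the padded bipartite graph with parts V̄0 = V0 ∪ D0, V̄1 = V1 ∪ D1 (D0, D1 disjoint sets of d new dummy vertices each), edge set E together with all pairs in D0 × V1 and V0 × D1, each dummy edge having cost 1. Let 0 ≤ s ≤ d with n − d − s ≥ 0, and let M̄ be any matching in Ḡ of size at least n + d − s. Then the restriction of M̄ to original–original edges is a matching in G of size at least n − d − s, and the total cost of M̄ in Ḡ is at least w_{n−d−s}(G, c) + 2(d − s). -/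

import Mathlib

/-- `M` is a matching of the bipartite graph with edge set `E`: a set of pairwise
vertex-disjoint edges of `E`. -/
def IsMatchingIn {α : Type*} (E M : Finset (α × α)) : Prop :=
  M ⊆ E ∧ (∀ p ∈ M, ∀ q ∈ M, p.1 = q.1 → p = q) ∧ (∀ p ∈ M, ∀ q ∈ M, p.2 = q.2 → p = q)

/-- The cost of a matching: the sum of the costs of its edges. -/
noncomputable def matchCost {α : Type*} (c : α × α → ℝ) (M : Finset (α × α)) : ℝ :=
  ∑ e ∈ M, c e

/-- `w_k(G, c)`: the minimum cost of a matching of size exactly `k` in the graph with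
edge set `E` and edge costs `c`. -/
noncomputable def minMatchCost {α : Type*} (E : Finset (α × α)) (c : α × α → ℝ) (k : ℕ) : ℝ :=
  sInf {x : ℝ | ∃ M : Finset (α × α), IsMatchingIn E M ∧ M.card = k ∧ x = matchCost c M}

/-- In the padded graph `Ḡ` (parts `V0 ∪ D0` and `V1 ∪ D1`, edges `E`
plus all dummy edges `D0 × V1` and `V0 × D1` of cost `1`), any matching `M̄` with
`|M̄| ≥ n + d − s` (where `0 ≤ s ≤ d` and `d + s ≤ n`) restricts to a matching of `G`
on the original–original edges of size at least `n − d − s`, and its total `c̄`-cost is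
at least `w_{n−d−s}(G, c) + 2(d − s)`. -/
theorem stmt_9 {α : Type*} [DecidableEq α] (V0 V1 D0 D1 : Finset α) (n d s : ℕ)
    (hV0card : V0.card = n) (hV1card : V1.card = n)
    (hD0card : D0.card = d) (hD1card : D1.card = d) (hdn : d ≤ n)
    (hV0V1 : Disjoint V0 V1) (hD0V0 : Disjoint D0 V0) (hD0V1 : Disjoint D0 V1)
    (hD1V0 : Disjoint D1 V0) (hD1V1 : Disjoint D1 V1) (hD0D1 : Disjoint D0 D1)
    (E : Finset (α × α)) (hE : E ⊆ V0 ×ˢ V1)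
    (c : α × α → ℝ) (hc : ∀ e ∈ E, 0 ≤ c e)
    -- the padded graph `Ḡ`:
    (Ebar : Finset (α × α)) (hEbar : Ebar = E ∪ D0 ×ˢ V1 ∪ V0 ×ˢ D1)
    (cbar : α × α → ℝ)
    (hcbarE : ∀ e ∈ E, cbar e = c e)
    (hcbarD : ∀ e ∈ D0 ×ˢ V1 ∪ V0 ×ˢ D1, cbar e = 1)
    (hs : s ≤ d) (hds : d + s ≤ n)
    -- `M̄` is a matching in `Ḡ` of size at least `n + d − s`:
    (Mbar : Finset (α × α)) (hMbar : IsMatchingIn Ebar Mbar)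
    (hMbarcard : n + d - s ≤ Mbar.card) :
    IsMatchingIn E (Mbar ∩ E) ∧
      n - d - s ≤ (Mbar ∩ E).card ∧
      minMatchCost E c (n - d - s) + 2 * ((d : ℝ) - s) ≤ matchCost cbar Mbar := by
  obtain ⟨hsub, h1, h2⟩ := hMbar
  classical
  set M0 := Mbar ∩ E with hM0_def
  set A := Mbar ∩ (D0 ×ˢ V1) with hA_def
  set B := Mbar ∩ (V0 ×ˢ D1) with hB_def
  have hM0E : M0 ⊆ E := Finset.inter_subset_right
  have hM0M : M0 ⊆ Mbar := Finset.inter_subset_left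
  have hAM : A ⊆ Mbar := Finset.inter_subset_left
  have hBM : B ⊆ Mbar := Finset.inter_subset_left
  have hAD : A ⊆ D0 ×ˢ V1 := Finset.inter_subset_right
  have hBD : B ⊆ V0 ×ˢ D1 := Finset.inter_subset_right
  have hmatch : IsMatchingIn E M0 :=
    ⟨hM0E, fun p hp q hq h => h1 p (hM0M hp) q (hM0M hq) h,
      fun p hp q hq h => h2 p (hM0M hp) q (hM0M hq) h⟩
  have hpart : Mbar = M0 ∪ A ∪ B := by
    ext p
    simp only [hM0_def, hA_def, hB_def, Finset.mem_union, Finset.mem_inter]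
    constructor
    · intro hp
      have := hsub hp
      rw [hEbar] at this
      simp only [Finset.mem_union] at this
      tauto
    · rintro ((⟨h, _⟩ | ⟨h, _⟩) | ⟨h, _⟩) <;> exact h
  have hdAB : Disjoint A B := by
    rw [Finset.disjoint_left]
    rintro p hp hq
    have h1' := Finset.mem_product.1 (hAD hp)
    have h2' := Finset.mem_product.1 (hBD hq)
    exact (Finset.disjoint_left.1 hD0V0) h1'.1 h2'.1
  have hdMA : Disjoint M0 A := by
    rw [Finset.disjoint_left]
    rintro p hp hq
    have h1' := Finset.mem_product.1 (hE (hM0E hp))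
    have h2' := Finset.mem_product.1 (hAD hq)
    exact (Finset.disjoint_left.1 hD0V0) h2'.1 h1'.1
  have hdMB : Disjoint M0 B := by
    rw [Finset.disjoint_left]
    rintro p hp hq
    have h1' := Finset.mem_product.1 (hE (hM0E hp))
    have h2' := Finset.mem_product.1 (hBD hq)
    exact (Finset.disjoint_left.1 hD1V1) h2'.2 h1'.2
  have hdisj : Disjoint (M0 ∪ A) B := Finset.disjoint_union_left.2 ⟨hdMB, hdAB⟩
  have hcard : Mbar.card = M0.card + A.card + B.card := by
    rw [hpart, Finset.card_union_of_disjoint hdisj, Finset.card_union_of_disjoint hdMA]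
  have hinj1 : Set.InjOn Prod.fst (Mbar : Set (α × α)) := fun p hp q hq h =>
    h1 p hp q hq h
  have hinj2 : Set.InjOn Prod.snd (Mbar : Set (α × α)) := fun p hp q hq h =>
    h2 p hp q hq h
  have hMBn : M0.card + B.card ≤ n := by
    rw [← Finset.card_union_of_disjoint hdMB, ← hV0card]
    apply Finset.card_le_card_of_injOn Prod.fst
    · intro p hp
      rcases Finset.mem_union.1 hp with h | h
      · exact (Finset.mem_product.1 (hE (hM0E h))).1
      · exact (Finset.mem_product.1 (hBD h)).1
    · exact hinj1.mono (by
        intro p hp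
        rcases Finset.mem_union.1 hp with h | h
        · exact hM0M h
        · exact hBM h)
  have hMAn : M0.card + A.card ≤ n := by
    rw [← Finset.card_union_of_disjoint hdMA, ← hV1card]
    apply Finset.card_le_card_of_injOn Prod.snd
    · intro p hp
      rcases Finset.mem_union.1 hp with h | h
      · exact (Finset.mem_product.1 (hE (hM0E h))).2
      · exact (Finset.mem_product.1 (hAD h)).2
    · exact hinj2.mono (by
        intro p hp
        rcases Finset.mem_union.1 hp with h | h
        · exact hM0M h
        · exact hAM h)
  have hAd : A.card ≤ d := by
    rw [← hD0card]
    apply Finset.card_le_card_of_injOn Prod.fst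
    · intro p hp
      exact (Finset.mem_product.1 (hAD hp)).1
    · exact hinj1.mono (fun p hp => hAM hp)
  have hBd : B.card ≤ d := by
    rw [← hD1card]
    apply Finset.card_le_card_of_injOn Prod.snd
    · intro p hp
      exact (Finset.mem_product.1 (hBD hp)).2
    · exact hinj2.mono (fun p hp => hBM hp)
  have hM0big : n - d - s ≤ M0.card := by omega
  have hAbig : d - s ≤ A.card := by omega
  have hBbig : d - s ≤ B.card := by omega
  refine ⟨hmatch, hM0big, ?_⟩
  -- cost computation
  have hsum : matchCost cbar Mbar = matchCost c M0 + A.card + B.card := by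
    rw [matchCost, hpart, Finset.sum_union hdisj, Finset.sum_union hdMA]
    have e0 : ∑ e ∈ M0, cbar e = matchCost c M0 :=
      Finset.sum_congr rfl fun e he => hcbarE e (hM0E he)
    have eA : ∑ e ∈ A, cbar e = A.card := by
      rw [Finset.sum_congr rfl fun e he =>
        hcbarD e (Finset.mem_union_left _ (hAD he))]
      simp
    have eB : ∑ e ∈ B, cbar e = B.card := by
      rw [Finset.sum_congr rfl fun e he =>
        hcbarD e (Finset.mem_union_right _ (hBD he))]
      simp
    rw [e0, eA, eB]
  obtain ⟨M', hM'sub, hM'card⟩ := Finset.exists_subset_card_eq hM0big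
  have hM'match : IsMatchingIn E M' :=
    ⟨fun p hp => hM0E (hM'sub hp),
      fun p hp q hq h => hmatch.2.1 p (hM'sub hp) q (hM'sub hq) h,
      fun p hp q hq h => hmatch.2.2 p (hM'sub hp) q (hM'sub hq) h⟩
  have hmin : minMatchCost E c (n - d - s) ≤ matchCost c M' := by
    apply csInf_le
    · refine ⟨0, ?_⟩
      rintro x ⟨M, hM, -, rfl⟩
      exact Finset.sum_nonneg fun e he => hc e (hM.1 he)
    · exact ⟨M', hM'match, hM'card, rfl⟩
  have hmono : matchCost c M' ≤ matchCost c M0 :=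
    Finset.sum_le_sum_of_subset_of_nonneg hM'sub fun e he _ => hc e (hM0E he)
  have hAcast : (d : ℝ) - s ≤ A.card := by
    have := (Nat.cast_le (α := ℝ)).2 hAbig
    rw [Nat.cast_sub hs] at this
    linarith
  have hBcast : (d : ℝ) - s ≤ B.card := by
    have := (Nat.cast_le (α := ℝ)).2 hBbig
    rw [Nat.cast_sub hs] at this
    linarith
  rw [hsum]
  linarith
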